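/- For α > 0 and x, μ ∈ ℝ, (1/α)·exp(−α|x−μ|) = ∫₀^∞ (1/√(2πν)) · exp(−((x−μ)²/(2ν) + α²·ν/2)) dν. -/

import Mathlib

open MeasureTheory Real Set

/-- Cauchy–Schlömilch for the Gaussian: `∫₀^∞ exp (-a (t - c/t)^2) dt = √(π/a)/2`. -/
lemma cs_gaussian {a c : ℝ} (ha : 0 < a) (hc : 0 < c) :
    ∫ t in Ioi (0 : ℝ), Real.exp (-a * (t - c / t) ^ 2) = Real.sqrt (π / a) / 2 := by
  set f : ℝ → ℝ := fun t => t - c / t with hf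
  have hderiv : ∀ t ∈ Ioi (0 : ℝ), HasDerivWithinAt f (1 + c / t ^ 2) (Ioi 0) t := by
    intro t ht
    have ht0 : t ≠ 0 := ne_of_gt ht
    have h1 : HasDerivAt f (1 - c * (-(t ^ 2)⁻¹)) t := by
      have : HasDerivAt (fun y => y - c * y⁻¹) (1 - c * (-(t ^ 2)⁻¹)) t :=
        (hasDerivAt_id' t).sub ((hasDerivAt_inv ht0).const_mul c)
      simpa [hf, div_eq_mul_inv] using this
    have : (1 - c * (-(t ^ 2)⁻¹)) = 1 + c / t ^ 2 := by field_simp; ring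
    exact (this ▸ h1).hasDerivWithinAt
  have hinj : InjOn f (Ioi 0) := by
    apply StrictMonoOn.injOn
    intro p hp q hq hpq
    have hp0 : (0:ℝ) < p := hp
    have hq0 : (0:ℝ) < q := hq
    have : c / q < c / p := div_lt_div_of_pos_left hc hp0 hpq
    simp only [hf]
    linarith
  have himg : f '' Ioi 0 = univ := by
    ext u
    simp only [mem_image, mem_univ, iff_true]
    set s := Real.sqrt (u ^ 2 + 4 * c) with hsdef
    have hs2 : s ^ 2 = u ^ 2 + 4 * c := Real.sq_sqrt (by positivity)
    have hsnn : 0 ≤ s := Real.sqrt_nonneg _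
    have htpos : 0 < (u + s) / 2 := by nlinarith
    refine ⟨(u + s) / 2, htpos, ?_⟩
    have hne : (u + s) / 2 ≠ 0 := ne_of_gt htpos
    have hne2 : u + s ≠ 0 := by intro h; rw [h] at htpos; simp at htpos
    simp only [hf]
    field_simp
    nlinarith [hs2]
  -- change of variables u = f t
  have key := integral_image_eq_integral_abs_deriv_smul measurableSet_Ioi hderiv hinj
      (fun u => Real.exp (-a * u ^ 2))
  rw [himg, setIntegral_univ, integral_gaussian] at key
  -- integrability of the transported integrand
  have hgint : IntegrableOn (fun u => Real.exp (-a * u ^ 2)) (f '' Ioi 0) := by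
    rw [himg]
    exact (integrable_exp_neg_mul_sq ha).integrableOn
  have hint := (integrableOn_image_iff_integrableOn_abs_deriv_smul measurableSet_Ioi hderiv hinj
      (fun u => Real.exp (-a * u ^ 2))).mp hgint
  simp only [hf] at hint key
  set F : ℝ → ℝ := fun t => Real.exp (-a * (t - c / t) ^ 2) with hF
  have hFmeas : AEStronglyMeasurable F (volume.restrict (Ioi 0)) := by
    have m1 : Measurable fun t : ℝ => -a * (t - c / t) ^ 2 :=
      ((measurable_id.sub (measurable_const.div measurable_id)).pow_const 2).const_mul (-a)
    exact (Real.measurable_exp.comp m1).aestronglyMeasurable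
  have hF1 : IntegrableOn F (Ioi 0) := by
    refine Integrable.mono hint hFmeas ?_
    filter_upwards [ae_restrict_mem measurableSet_Ioi] with t ht
    have ht0 : (0:ℝ) < t := ht
    have h1 : (0:ℝ) ≤ F t := Real.exp_nonneg _
    have h2 : (1:ℝ) ≤ 1 + c / t ^ 2 := by
      have : 0 < c / t ^ 2 := by positivity
      linarith
    simp only [smul_eq_mul, Real.norm_eq_abs, hF]
    rw [abs_of_nonneg h1, abs_of_nonneg (by positivity : (0:ℝ) ≤ |1 + c / t ^ 2| * Real.exp (-a * (t - c / t) ^ 2)), abs_of_nonneg (by positivity : (0:ℝ) ≤ 1 + c / t ^ 2)]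
    nlinarith [Real.exp_nonneg (-a * (t - c / t) ^ 2)]
  have hsum : IntegrableOn (fun t => F t + (c / t ^ 2) * F t) (Ioi 0) := by
    apply hint.congr
    filter_upwards [ae_restrict_mem measurableSet_Ioi] with t ht
    have ht0 : (0:ℝ) < t := ht
    have h2 : (0:ℝ) ≤ 1 + c / t ^ 2 := by positivity
    simp only [smul_eq_mul, hF, abs_of_nonneg h2]
    ring
  have hF2 : IntegrableOn (fun t => (c / t ^ 2) * F t) (Ioi 0) := by
    have h := hsum.sub hF1
    refine h.congr (Filter.Eventually.of_forall fun t => ?_)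
    simp only [Pi.sub_apply]
    ring
  -- the symmetry t ↦ c / t
  have hderiv2 : ∀ t ∈ Ioi (0 : ℝ), HasDerivWithinAt (fun s => c / s) (-(c / t ^ 2)) (Ioi 0) t := by
    intro t ht
    have ht0 : t ≠ 0 := ne_of_gt (show (0:ℝ) < t from ht)
    have h1 : HasDerivAt (fun s => c / s) (c * (-(t ^ 2)⁻¹)) t := by
      simpa [div_eq_mul_inv] using (hasDerivAt_inv ht0).const_mul c
    have : c * (-(t ^ 2)⁻¹) = -(c / t ^ 2) := by field_simp
    exact (this ▸ h1).hasDerivWithinAt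
  have hinj2 : InjOn (fun s => c / s) (Ioi 0) := by
    intro p hp q hq h
    have hp0 : (0:ℝ) < p := hp
    have hq0 : (0:ℝ) < q := hq
    field_simp at h
    exact h.symm
  have himg2 : (fun s => c / s) '' Ioi 0 = Ioi 0 := by
    ext t
    simp only [mem_image, mem_Ioi]
    constructor
    · rintro ⟨s, hs, rfl⟩; positivity
    · intro ht; exact ⟨c / t, by positivity, by field_simp⟩
  have hsym : ∫ t in Ioi (0:ℝ), F t = ∫ t in Ioi (0:ℝ), (c / t ^ 2) * F t := by
    have key2 := integral_image_eq_integral_abs_deriv_smul measurableSet_Ioi hderiv2 hinj2 F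
    rw [himg2] at key2
    rw [key2]
    apply setIntegral_congr_fun measurableSet_Ioi
    intro t ht
    dsimp only
    have ht0 : (0:ℝ) < t := ht
    have hcc : c / (c / t) = t := by field_simp
    have habs : |(-(c / t ^ 2))| = c / t ^ 2 := by
      rw [abs_neg, abs_of_nonneg (by positivity)]
    simp only [smul_eq_mul, habs, hF, hcc]
    congr 2
    ring
  -- put it together
  have hsplit : ∫ t in Ioi (0:ℝ), (F t + (c / t ^ 2) * F t) =
      (∫ t in Ioi (0:ℝ), F t) + ∫ t in Ioi (0:ℝ), (c / t ^ 2) * F t :=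
    integral_add hF1 hF2
  have heq : Real.sqrt (π / a) = 2 * ∫ t in Ioi (0:ℝ), F t := by
    rw [key]
    have : ∫ t in Ioi (0:ℝ), |1 + c / t ^ 2| • Real.exp (-a * (t - c / t) ^ 2)
        = ∫ t in Ioi (0:ℝ), (F t + (c / t ^ 2) * F t) := by
      apply setIntegral_congr_fun measurableSet_Ioi
      intro t ht
      have ht0 : (0:ℝ) < t := ht
      have h2 : (0:ℝ) ≤ 1 + c / t ^ 2 := by positivity
      simp only [smul_eq_mul, hF, abs_of_nonneg h2]
      ring
    rw [this, hsplit, ← hsym]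
    ring
  simp only [hF] at heq
  linarith [heq]

theorem laplace_as_gaussian_variance_mixture (α x μ : ℝ) (hα : 0 < α) :
    (1 / α) * Real.exp (-α * |x - μ|)
      = ∫ ν in Ioi (0 : ℝ),
          (1 / Real.sqrt (2 * π * ν)) *
            Real.exp (-((x - μ) ^ 2 / (2 * ν) + α ^ 2 * ν / 2)) := by
  set b := |x - μ| with hbdef
  have hb : 0 ≤ b := abs_nonneg _
  have hxb : (x - μ) ^ 2 = b ^ 2 := (sq_abs _).symm
  set c := b / α with hcdef
  -- change of variables ν = t ^ 2
  have hderiv : ∀ t ∈ Ioi (0 : ℝ), HasDerivWithinAt (fun t : ℝ => t ^ 2) (2 * t) (Ioi 0) t := by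
    intro t ht
    have := hasDerivAt_pow 2 t
    simpa [mul_comm] using this.hasDerivWithinAt
  have hinj : InjOn (fun t : ℝ => t ^ 2) (Ioi 0) := by
    intro p hp q hq h
    have hp0 : (0:ℝ) < p := hp
    have hq0 : (0:ℝ) < q := hq
    simp only at h
    nlinarith
  have himg : (fun t : ℝ => t ^ 2) '' Ioi 0 = Ioi 0 := by
    ext ν
    simp only [mem_image, mem_Ioi]
    constructor
    · rintro ⟨t, ht, rfl⟩; positivity
    · intro hν
      exact ⟨Real.sqrt ν, Real.sqrt_pos.mpr hν, Real.sq_sqrt hν.le⟩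
  have key := integral_image_eq_integral_abs_deriv_smul measurableSet_Ioi hderiv hinj
      (fun ν => (1 / Real.sqrt (2 * π * ν)) * Real.exp (-((x - μ) ^ 2 / (2 * ν) + α ^ 2 * ν / 2)))
  rw [himg] at key
  rw [key]
  have hstep : ∫ t in Ioi (0:ℝ),
      |2 * t| • ((1 / Real.sqrt (2 * π * t ^ 2)) *
        Real.exp (-((x - μ) ^ 2 / (2 * t ^ 2) + α ^ 2 * t ^ 2 / 2)))
      = ∫ t in Ioi (0:ℝ),
        (2 / Real.sqrt (2 * π)) * Real.exp (-α * b) *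
          Real.exp (-(α ^ 2 / 2) * (t - c / t) ^ 2) := by
    apply setIntegral_congr_fun measurableSet_Ioi
    intro t ht
    dsimp only
    have ht0 : (0:ℝ) < t := ht
    have hsqrt : Real.sqrt (2 * π * t ^ 2) = Real.sqrt (2 * π) * t := by
      rw [Real.sqrt_mul (by positivity), Real.sqrt_sq ht0.le]
    have hexp : -((x - μ) ^ 2 / (2 * t ^ 2) + α ^ 2 * t ^ 2 / 2)
        = -α * b + -(α ^ 2 / 2) * (t - c / t) ^ 2 := by
      have ht' : t ≠ 0 := ne_of_gt ht0
      have hα' : α ≠ 0 := ne_of_gt hα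
      rw [hxb, hcdef]
      field_simp
      ring
    rw [hexp, Real.exp_add, hsqrt]
    have h2pi : (0:ℝ) < Real.sqrt (2 * π) := Real.sqrt_pos.mpr (by positivity)
    rw [abs_of_nonneg (by positivity : (0:ℝ) ≤ 2 * t)]
    simp only [smul_eq_mul]
    field_simp
  rw [hstep, integral_const_mul]
  have hJ : ∫ t in Ioi (0:ℝ), Real.exp (-(α ^ 2 / 2) * (t - c / t) ^ 2)
      = Real.sqrt (π / (α ^ 2 / 2)) / 2 := by
    rcases eq_or_lt_of_le hb with hb0 | hb0
    · have hc0 : c = 0 := by rw [hcdef, ← hb0]; simp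
      simp only [hc0, zero_div, sub_zero]
      exact integral_gaussian_Ioi _
    · exact cs_gaussian (by positivity) (by rw [hcdef]; positivity)
  rw [hJ]
  have hsq : Real.sqrt (π / (α ^ 2 / 2)) = Real.sqrt (2 * π) / α := by
    rw [show π / (α ^ 2 / 2) = (2 * π) / α ^ 2 by ring,
      Real.sqrt_div (by positivity), Real.sqrt_sq hα.le]
  rw [hsq]
  have h2pi : Real.sqrt (2 * π) ≠ 0 := by positivity
  have hα' : α ≠ 0 := ne_of_gt hα
  field_simp
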